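/- Let p be real with 1/2 ≤ p ≤ 1 and let n ≥ 2. If C_{n−1}(p) ≤ 1/3, then C_n(p) ≤ 1/3. -/
import Mathlib

set_option maxHeartbeats 1000000

/-- For 1/2 ≤ p ≤ 1 and n ≥ 2, if C_{n-1} ≤ 1/3 then C_n ≤ 1/3. -/
theorem fitch_C_small_stays_small
    (p : ℝ) (C D : ℕ → ℝ)
    (hC0 : C 0 = 0) (hD0 : D 0 = 1)
    (hC : ∀ n, 2 * C (n + 1) =
        1 - 2 * C n + 3 * (C n) ^ 2 - (2 * p - 1) ^ 2 * (D n) ^ 2)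
    (hD : ∀ n, D (n + 1) = (2 * p - 1) * (1 + C n) * D n)
    (hp1 : 1 / 2 ≤ p) (hp2 : p ≤ 1)
    (n : ℕ) (hn : 2 ≤ n) (h : C (n - 1) ≤ 1 / 3) :
    C n ≤ 1 / 3 := by
  set q : ℝ := 2 * p - 1 with hq
  have hq0 : 0 ≤ q := by simp [hq]; linarith
  have hq1 : q ≤ 1 := by simp [hq]; linarith
  set s : ℝ := Real.sqrt 3 with hs
  have hs3 : s ^ 2 = 3 := Real.sq_sqrt (by norm_num)
  have hs0 : 0 < s := Real.sqrt_pos.mpr (by norm_num)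
  have hs2 : s ≤ 2 := by nlinarith
  have hs15 : (3:ℝ)/2 ≤ s := by nlinarith
  -- invariant for all m ≥ 1
  have inv : ∀ k : ℕ, 0 ≤ C (k+1) ∧ 0 ≤ D (k+1) ∧ D (k+1) ≤ 1 - C (k+1) ∧
      1 - 3 * C (k+1) ≤ s * q * D (k+1) := by
    intro k
    induction k with
    | zero =>
      have h1 := hC 0
      have h2 := hD 0
      rw [hC0, hD0] at h1 h2
      rw [h2]
      refine ⟨by nlinarith, by nlinarith, by nlinarith [sq_nonneg (1 - q)], ?_⟩
      -- 1 - 3*(1-q^2)/2 ≤ s*q*q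
      nlinarith [mul_nonneg (by linarith : (0:ℝ) ≤ 2*s - 3) (mul_nonneg hq0 hq0)]
    | succ k ih =>
      obtain ⟨hc, hd, hdc, hF⟩ := ih
      set c := C (k+1)
      set d := D (k+1)
      have h1 := hC (k+1)
      have h2 := hD (k+1)
      have hy0 : 0 ≤ q * d := mul_nonneg hq0 hd
      have hy1 : q * d ≤ 1 - c := le_trans (by nlinarith) hdc
      have hC2 : 0 ≤ C (k+2) := by
        have hsq : q * d * (q * d) ≤ (1 - c) * (1 - c) :=
          mul_le_mul hy1 hy1 hy0 (by linarith)
        nlinarith [hsq, sq_nonneg c, h1]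
      have hD2 : 0 ≤ D (k+2) := by
        rw [h2]; exact mul_nonneg (mul_nonneg hq0 (by linarith)) hd
      have hDC2 : D (k+2) ≤ 1 - C (k+2) := by
        rw [h2]
        have hy2 : q * d ≤ 1 + 3 * c := by linarith
        have hprod := mul_nonneg (sub_nonneg.2 hy1) (sub_nonneg.2 hy2)
        nlinarith [hprod, h1]
      refine ⟨hC2, hD2, hDC2, ?_⟩
      -- main invariant step
      have h3d : 3 * d ≤ 2 * s * (1 + c) := by
        nlinarith [mul_nonneg (by linarith : (0:ℝ) ≤ 2*s - 3)
          (by linarith : (0:ℝ) ≤ 1 + c)]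
      have h5 := mul_le_mul_of_nonneg_left h3d
        (mul_nonneg (mul_nonneg hq0 hq0) hd)
      have key : (s * q * d) ^ 2 ≤ 2 * q * (1 + c) * (s * q * d) :=
        calc (s * q * d) ^ 2 = q * q * d * (3 * d) := by
              rw [mul_pow, mul_pow, hs3]; ring
          _ ≤ q * q * d * (2 * s * (1 + c)) := h5
          _ = 2 * q * (1 + c) * (s * q * d) := by ring
      have hx2 : (s * q * d) ^ 2 = 3 * (q ^ 2 * d ^ 2) := by
        rw [mul_pow, mul_pow, hs3]; ring
      rw [h2]
      nlinarith [key, hx2, h1, sq_nonneg (1 - 3 * c)]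
  -- conclude
  obtain ⟨m, rfl⟩ : ∃ m, n = m + 2 := ⟨n - 2, by omega⟩
  have hm : m + 2 - 1 = m + 1 := rfl
  rw [hm] at h
  obtain ⟨hc, hd, hdc, hF⟩ := inv m
  set c := C (m+1)
  set d := D (m+1)
  have h1 := hC (m+1)
  have h13 : 0 ≤ 1 - 3 * c := by linarith
  have hsq : (1 - 3*c) * (1 - 3*c) ≤ (s*q*d) * (s*q*d) :=
    mul_le_mul hF hF h13 (mul_nonneg (mul_nonneg hs0.le hq0) hd)
  nlinarith [hsq, hs3, sq_nonneg (q*d)]
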